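/- Let μ be a Radon measure on ℝ^d with μ(B(x,r)) ≤ C₀ r^n, and fix α = 2, β > 2^n. There is a constant C₃ = C₃(C₀,n,d,β) such that: if Q ⊂ R are concentric cubes and no cube of the form 2^k Q with k ≥ 0 and Q ⊂ 2^k Q ⊂ R is (2,β)-doubling, then δ(Q,R) ≤ C₃, where δ(Q,R) = ∫_{R∖Q} |x−z_Q|^{−n} dμ(x). -/

import Mathlib

open MeasureTheory Metric Set ENNReal

noncomputable section

/-- Closed axis-parallel cube centered at `c` with side length `l`. -/
def cube {d : ℕ} (c : EuclideanSpace ℝ (Fin d)) (l : ℝ) :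
    Set (EuclideanSpace ℝ (Fin d)) := {y | ∀ i, |y i - c i| ≤ l / 2}

lemma cube_mono {d : ℕ} (z : EuclideanSpace ℝ (Fin d)) {l l' : ℝ} (h : l ≤ l') :
    cube z l ⊆ cube z l' := fun x hx i => (hx i).trans (by linarith)

lemma measurableSet_cube {d : ℕ} (z : EuclideanSpace ℝ (Fin d)) (l : ℝ) :
    MeasurableSet (cube z l) := by
  have : cube z l = ⋂ i, {y : EuclideanSpace ℝ (Fin d) | |y i - z i| ≤ l / 2} := by
    ext y; simp [cube, Set.mem_iInter]
  rw [this]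
  refine MeasurableSet.iInter fun i => ?_
  have hc : Continuous fun y : EuclideanSpace ℝ (Fin d) => |y i - z i| :=
    ((PiLp.continuous_apply 2 _ i).sub continuous_const).abs
  exact (isClosed_le hc continuous_const).measurableSet

lemma coord_le_dist {d : ℕ} (x z : EuclideanSpace ℝ (Fin d)) (i : Fin d) :
    |x i - z i| ≤ dist x z := by
  rw [EuclideanSpace.dist_eq]
  have h1 : |x i - z i| = Real.sqrt (dist (x i) (z i) ^ 2) := by
    rw [Real.dist_eq, Real.sqrt_sq_eq_abs, abs_abs]
  rw [h1]
  apply Real.sqrt_le_sqrt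
  exact Finset.single_le_sum (f := fun j => dist (x j) (z j) ^ 2)
    (fun j _ => by positivity) (Finset.mem_univ i)

lemma dist_lt_of_not_mem_cube {d : ℕ} {x z : EuclideanSpace ℝ (Fin d)} {l : ℝ}
    (h : x ∉ cube z l) : l / 2 < dist x z := by
  simp only [cube, Set.mem_setOf_eq, not_forall, not_le] at h
  obtain ⟨i, hi⟩ := h
  exact hi.trans_le (coord_le_dist x z i)

lemma cube_subset_closedBall {d : ℕ} (z : EuclideanSpace ℝ (Fin d)) {l : ℝ} (hl : 0 ≤ l) :
    cube z l ⊆ Metric.closedBall z (Real.sqrt d * l / 2) := by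
  intro x hx
  rw [Metric.mem_closedBall, EuclideanSpace.dist_eq]
  have hb : ∑ i, dist (x i) (z i) ^ 2 ≤ (d : ℝ) * (l / 2) ^ 2 := by
    calc ∑ i, dist (x i) (z i) ^ 2 ≤ ∑ _i : Fin d, (l / 2) ^ 2 := by
          apply Finset.sum_le_sum
          intro i _
          have := hx i
          rw [Real.dist_eq]
          have h0 : (0:ℝ) ≤ |x i - z i| := abs_nonneg _
          nlinarith
      _ = (d : ℝ) * (l / 2) ^ 2 := by
          simp [Finset.sum_const, Finset.card_univ, nsmul_eq_mul]
  calc Real.sqrt (∑ i, dist (x i) (z i) ^ 2) ≤ Real.sqrt ((d : ℝ) * (l / 2) ^ 2) :=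
        Real.sqrt_le_sqrt hb
    _ = Real.sqrt d * (l / 2) := by
        rw [Real.sqrt_mul (Nat.cast_nonneg d), Real.sqrt_sq (by linarith)]
    _ = Real.sqrt d * l / 2 := by ring

theorem stmt4 {d : ℕ} (n C₀ β : ℝ) (hn : 0 < n) (hnd : n ≤ d) (hC₀ : 0 < C₀)
    (hβ : (2 : ℝ) ^ n < β) :
    ∃ C₃ : ℝ, 0 < C₃ ∧
      ∀ (μ : Measure (EuclideanSpace ℝ (Fin d))), Measure.Regular μ →
        (∀ (x : EuclideanSpace ℝ (Fin d)) (r : ℝ), 0 < r →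
          μ (Metric.closedBall x r) ≤ ENNReal.ofReal (C₀ * r ^ n)) →
        ∀ (z : EuclideanSpace ℝ (Fin d)) (lQ lR : ℝ), 0 < lQ → lQ ≤ lR →
          (∀ k : ℕ, (2 : ℝ) ^ k * lQ ≤ lR →
            ¬ (μ (cube z (2 * ((2 : ℝ) ^ k * lQ))) ≤
                ENNReal.ofReal β * μ (cube z ((2 : ℝ) ^ k * lQ)))) →
          (∫⁻ x in cube z lR \ cube z lQ, ENNReal.ofReal (dist x z ^ (-n)) ∂μ)
            ≤ ENNReal.ofReal C₃ := by
  classical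
  have h2n : (0:ℝ) < (2:ℝ) ^ n := Real.rpow_pos_of_pos two_pos n
  have hβ0 : (0:ℝ) < β := h2n.trans hβ
  have hd0 : (0:ℝ) < d := hn.trans_le hnd
  have hsd : (0:ℝ) < Real.sqrt d := Real.sqrt_pos.mpr hd0
  set r : ℝ := (2:ℝ) ^ n / β with hr_def
  have hr0 : 0 < r := div_pos h2n hβ0
  have hr1 : r < 1 := (div_lt_one hβ0).mpr hβ
  have h1r : 0 < 1 - r := by linarith
  set A : ℝ := C₀ * Real.sqrt d ^ n * (2:ℝ) ^ n with hA_def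
  have hA0 : 0 < A := by
    apply mul_pos (mul_pos hC₀ _) h2n
    exact Real.rpow_pos_of_pos hsd n
  refine ⟨A / (1 - r), div_pos hA0 h1r, ?_⟩
  intro μ _hreg hC z lQ lR hlQ hlQR hND
  -- find K : the largest k with 2^k * lQ ≤ lR
  obtain ⟨N, hN⟩ := pow_unbounded_of_one_lt (lR / lQ) (one_lt_two (α := ℝ))
  set P : ℕ → Prop := fun k => (2:ℝ) ^ k * lQ ≤ lR with hP_def
  set K : ℕ := Nat.findGreatest P N with hK_def
  have hP0 : P 0 := by simpa [hP_def] using hlQR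
  have hPK : (2:ℝ) ^ K * lQ ≤ lR := Nat.findGreatest_spec (Nat.zero_le N) hP0
  have hPN : lR < (2:ℝ) ^ N * lQ := by
    calc lR = lR / lQ * lQ := by field_simp
      _ < 2 ^ N * lQ := by exact mul_lt_mul_of_pos_right hN hlQ
  have hKN : K < N := by
    rcases lt_or_eq_of_le (Nat.findGreatest_le N : K ≤ N) with h | h
    · exact h
    · have h2 : (2:ℝ) ^ N * lQ ≤ lR := by rw [← h]; exact hPK
      linarith
  have hPK1 : ¬ P (K + 1) :=
    Nat.findGreatest_is_greatest (Nat.lt_succ_self K) hKN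
  have hRK : lR ≤ (2:ℝ) ^ (K + 1) * lQ := by
    simp only [hP_def, not_le] at hPK1
    exact hPK1.le
  -- growth of measure along non-doubling cubes
  have key : ∀ j, j ≤ K + 1 →
      ENNReal.ofReal (β ^ j) * μ (cube z ((2:ℝ) ^ (K + 1 - j) * lQ)) ≤
        μ (cube z ((2:ℝ) ^ (K + 1) * lQ)) := by
    intro j
    induction j with
    | zero => intro _; simp
    | succ j ih =>
      intro hj
      have hjK : j ≤ K := Nat.lt_succ_iff.mp hj
      have harg : (2:ℝ) ^ (K - j) * lQ ≤ lR := by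
        refine le_trans ?_ hPK
        have : (2:ℝ) ^ (K - j) ≤ 2 ^ K :=
          pow_le_pow_right₀ one_le_two (Nat.sub_le K j)
        exact mul_le_mul_of_nonneg_right this hlQ.le
      have hnd := hND (K - j) harg
      have hstep : ENNReal.ofReal β * μ (cube z ((2:ℝ) ^ (K - j) * lQ)) ≤
          μ (cube z (2 * ((2:ℝ) ^ (K - j) * lQ))) := (not_le.mp hnd).le
      have h2 : 2 * ((2:ℝ) ^ (K - j) * lQ) = (2:ℝ) ^ (K + 1 - j) * lQ := by
        have : K + 1 - j = (K - j) + 1 := by omega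
        rw [this, pow_succ]
        ring
      have hKj : K + 1 - (j + 1) = K - j := by omega
      calc ENNReal.ofReal (β ^ (j + 1)) * μ (cube z ((2:ℝ) ^ (K + 1 - (j + 1)) * lQ))
          = ENNReal.ofReal (β ^ j) *
            (ENNReal.ofReal β * μ (cube z ((2:ℝ) ^ (K - j) * lQ))) := by
            rw [hKj, pow_succ, ENNReal.ofReal_mul (pow_nonneg hβ0.le j), mul_assoc]
        _ ≤ ENNReal.ofReal (β ^ j) * μ (cube z ((2:ℝ) ^ (K + 1 - j) * lQ)) := by
            rw [← h2]; exact mul_le_mul_right hstep _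
        _ ≤ μ (cube z ((2:ℝ) ^ (K + 1) * lQ)) := ih (by omega)
  -- upper bound on the biggest cube
  set M : ℝ := C₀ * (Real.sqrt d * ((2:ℝ) ^ (K + 1) * lQ) / 2) ^ n with hM_def
  have hrad : (0:ℝ) < Real.sqrt d * ((2:ℝ) ^ (K + 1) * lQ) / 2 := by positivity
  have hM : μ (cube z ((2:ℝ) ^ (K + 1) * lQ)) ≤ ENNReal.ofReal M :=
    (measure_mono (cube_subset_closedBall z (by positivity))).trans (hC z _ hrad)
  -- bound on each cube, k ≤ K
  have hμk : ∀ k : ℕ, k ≤ K →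
      μ (cube z ((2:ℝ) ^ (k + 1) * lQ)) ≤ ENNReal.ofReal (M / β ^ (K - k)) := by
    intro k hk
    have hkey := key (K - k) (by omega)
    have hKk : K + 1 - (K - k) = k + 1 := by omega
    rw [hKk] at hkey
    have hkey2 : μ (cube z ((2:ℝ) ^ (k + 1) * lQ)) * ENNReal.ofReal (β ^ (K - k)) ≤
        ENNReal.ofReal M := by
      rw [mul_comm]; exact hkey.trans hM
    have hβp : (0:ℝ) < β ^ (K - k) := pow_pos hβ0 _
    rw [ENNReal.ofReal_div_of_pos hβp]
    exact (ENNReal.le_div_iff_mul_le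
      (Or.inl (by simp [ENNReal.ofReal_eq_zero, not_le, hβp]))
      (Or.inl ENNReal.ofReal_ne_top)).mpr hkey2
  -- annuli
  set Ann : ℕ → Set (EuclideanSpace ℝ (Fin d)) :=
    fun k => cube z ((2:ℝ) ^ (k + 1) * lQ) \ cube z ((2:ℝ) ^ k * lQ) with hAnn_def
  -- covering
  have hcover : cube z lR \ cube z lQ ⊆ ⋃ k : Fin (K + 1), Ann k := by
    rintro x ⟨hxR, hxQ⟩
    have hxK : x ∈ cube z ((2:ℝ) ^ (K + 1) * lQ) := cube_mono z hRK hxR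
    have hex : ∃ m, x ∈ cube z ((2:ℝ) ^ m * lQ) := ⟨K + 1, hxK⟩
    set m : ℕ := Nat.find hex with hm_def
    have hm : x ∈ cube z ((2:ℝ) ^ m * lQ) := Nat.find_spec hex
    have hm0 : m ≠ 0 := by
      intro h
      rw [h] at hm
      simp only [pow_zero, one_mul] at hm
      exact hxQ hm
    have hmK : m ≤ K + 1 := Nat.find_min' hex hxK
    have hmin : x ∉ cube z ((2:ℝ) ^ (m - 1) * lQ) :=
      Nat.find_min hex (Nat.sub_lt (Nat.pos_of_ne_zero hm0) one_pos)
    refine Set.mem_iUnion.mpr ⟨⟨m - 1, by omega⟩, ?_, hmin⟩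
    have : m - 1 + 1 = m := by omega
    simpa [this] using hm
  -- per-annulus integral bound
  have hAint : ∀ k : ℕ,
      (∫⁻ x in Ann k, ENNReal.ofReal (dist x z ^ (-n)) ∂μ) ≤
        ENNReal.ofReal (((2:ℝ) ^ k * lQ / 2) ^ (-n)) *
          μ (cube z ((2:ℝ) ^ (k + 1) * lQ)) := by
    intro k
    have hmeas : MeasurableSet (Ann k) :=
      (measurableSet_cube z _).diff (measurableSet_cube z _)
    have hpt : ∀ x ∈ Ann k, ENNReal.ofReal (dist x z ^ (-n)) ≤
        ENNReal.ofReal (((2:ℝ) ^ k * lQ / 2) ^ (-n)) := by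
      rintro x ⟨_, hxout⟩
      have hlt : (2:ℝ) ^ k * lQ / 2 < dist x z := dist_lt_of_not_mem_cube hxout
      have hpos : (0:ℝ) < (2:ℝ) ^ k * lQ / 2 := by positivity
      exact ENNReal.ofReal_le_ofReal
        (Real.rpow_le_rpow_of_nonpos hpos hlt.le (neg_nonpos.mpr hn.le))
    calc (∫⁻ x in Ann k, ENNReal.ofReal (dist x z ^ (-n)) ∂μ)
        ≤ ∫⁻ _x in Ann k, ENNReal.ofReal (((2:ℝ) ^ k * lQ / 2) ^ (-n)) ∂μ :=
          setLIntegral_mono' hmeas hpt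
      _ = ENNReal.ofReal (((2:ℝ) ^ k * lQ / 2) ^ (-n)) * μ (Ann k) :=
          setLIntegral_const _ _
      _ ≤ ENNReal.ofReal (((2:ℝ) ^ k * lQ / 2) ^ (-n)) *
            μ (cube z ((2:ℝ) ^ (k + 1) * lQ)) :=
          mul_le_mul_right (measure_mono Set.diff_subset) _
  -- algebra: the real-valued term
  have halg : ∀ k : ℕ, k ≤ K →
      ((2:ℝ) ^ k * lQ / 2) ^ (-n) * (M / β ^ (K - k)) = A * r ^ (K - k) := by
    intro k hk
    set j : ℕ := K - k with hj_def
    set a : ℝ := (2:ℝ) ^ k * lQ / 2 with ha_def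
    have ha : (0:ℝ) < a := by positivity
    have hsplit : Real.sqrt d * ((2:ℝ) ^ (K + 1) * lQ) / 2 =
        Real.sqrt d * (2:ℝ) ^ (j + 1) * a := by
      have : (2:ℝ) ^ (K + 1) = (2:ℝ) ^ (j + 1) * (2:ℝ) ^ k := by
        rw [← pow_add]; congr 1; omega
      rw [ha_def, this]; ring
    have hM2 : M = C₀ * ((Real.sqrt d * (2:ℝ) ^ (j + 1)) ^ n * a ^ n) := by
      rw [hM_def, hsplit, Real.mul_rpow (by positivity) ha.le]
    have han : a ^ (-n) * a ^ n = 1 := by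
      rw [Real.rpow_neg ha.le, inv_mul_cancel₀ (ne_of_gt (Real.rpow_pos_of_pos ha n))]
    have hsd2 : (Real.sqrt d * (2:ℝ) ^ (j + 1)) ^ n =
        Real.sqrt d ^ n * ((2:ℝ) ^ n) ^ (j + 1) := by
      rw [Real.mul_rpow hsd.le (by positivity)]
      congr 1
      rw [← Real.rpow_natCast (2:ℝ) (j + 1), ← Real.rpow_natCast ((2:ℝ) ^ n) (j + 1),
        ← Real.rpow_mul (by norm_num : (0:ℝ) ≤ 2),
        ← Real.rpow_mul (by norm_num : (0:ℝ) ≤ 2), mul_comm]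
    calc a ^ (-n) * (M / β ^ j)
        = (a ^ (-n) * a ^ n) * (C₀ * (Real.sqrt d * (2:ℝ) ^ (j + 1)) ^ n / β ^ j) := by
          rw [hM2]; ring
      _ = C₀ * (Real.sqrt d ^ n * ((2:ℝ) ^ n) ^ (j + 1)) / β ^ j := by
          rw [han, hsd2]; ring
      _ = A * r ^ j := by
          rw [hA_def, hr_def, pow_succ, div_pow]
          field_simp
  -- sum the geometric series
  have hsum : ∑ k ∈ Finset.range (K + 1), A * r ^ (K - k) ≤ A / (1 - r) := by
    have hrefl : ∑ k ∈ Finset.range (K + 1), A * r ^ (K - k) =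
        ∑ k ∈ Finset.range (K + 1), A * r ^ k := by
      rw [← Finset.sum_range_reflect]
      apply Finset.sum_congr rfl
      intro k hk
      have hkK := Finset.mem_range.mp hk
      congr 2
      omega
    rw [hrefl, ← Finset.mul_sum]
    have hgeom : ∑ k ∈ Finset.range (K + 1), r ^ k ≤ 1 / (1 - r) := by
      rw [geom_sum_eq (ne_of_lt hr1) (K + 1)]
      have heq : (r ^ (K + 1) - 1) / (r - 1) = (1 - r ^ (K + 1)) / (1 - r) := by
        rw [div_eq_div_iff (by linarith) (by linarith)]
        ring
      rw [heq, div_le_div_iff₀ h1r h1r]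
      nlinarith [pow_nonneg hr0.le (K + 1)]
    calc A * ∑ k ∈ Finset.range (K + 1), r ^ k ≤ A * (1 / (1 - r)) :=
          mul_le_mul_of_nonneg_left hgeom hA0.le
      _ = A / (1 - r) := by ring
  -- main chain
  calc (∫⁻ x in cube z lR \ cube z lQ, ENNReal.ofReal (dist x z ^ (-n)) ∂μ)
      ≤ ∫⁻ x in ⋃ k : Fin (K + 1), Ann k, ENNReal.ofReal (dist x z ^ (-n)) ∂μ :=
        lintegral_mono_set hcover
    _ ≤ ∑' k : Fin (K + 1), ∫⁻ x in Ann k, ENNReal.ofReal (dist x z ^ (-n)) ∂μ :=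
        lintegral_iUnion_le _ _
    _ = ∑ k : Fin (K + 1), ∫⁻ x in Ann k, ENNReal.ofReal (dist x z ^ (-n)) ∂μ :=
        tsum_fintype _
    _ ≤ ∑ k : Fin (K + 1), ENNReal.ofReal (A * r ^ (K - (k : ℕ))) := by
        apply Finset.sum_le_sum
        intro k _
        have hk : (k : ℕ) ≤ K := Nat.lt_succ_iff.mp k.isLt
        calc (∫⁻ x in Ann k, ENNReal.ofReal (dist x z ^ (-n)) ∂μ)
            ≤ ENNReal.ofReal (((2:ℝ) ^ (k:ℕ) * lQ / 2) ^ (-n)) *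
                μ (cube z ((2:ℝ) ^ ((k:ℕ) + 1) * lQ)) := hAint k
          _ ≤ ENNReal.ofReal (((2:ℝ) ^ (k:ℕ) * lQ / 2) ^ (-n)) *
                ENNReal.ofReal (M / β ^ (K - (k:ℕ))) :=
              mul_le_mul_right (hμk k hk) _
          _ = ENNReal.ofReal (((2:ℝ) ^ (k:ℕ) * lQ / 2) ^ (-n) * (M / β ^ (K - (k:ℕ)))) := by
              rw [← ENNReal.ofReal_mul (by positivity)]
          _ = ENNReal.ofReal (A * r ^ (K - (k : ℕ))) := by rw [halg k hk]
    _ = ENNReal.ofReal (∑ k ∈ Finset.range (K + 1), A * r ^ (K - k)) := by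
        rw [ENNReal.ofReal_sum_of_nonneg (fun i _ => by positivity),
          ← Fin.sum_univ_eq_sum_range]
    _ ≤ ENNReal.ofReal (A / (1 - r)) := ENNReal.ofReal_le_ofReal hsum
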